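/- Let H ⊴ GL₂(ℤ/9ℤ) be a normal subgroup such that the subgroup generated by SL₂(ℤ/9ℤ) together with H is all of GL₂(ℤ/9ℤ). Then H = GL₂(ℤ/9ℤ). -/

import Mathlib

open scoped MatrixGroups

/-- `SL₂(R)` viewed as a subgroup of `GL₂(R)`. -/
def SL2subgroup (R : Type*) [CommRing R] : Subgroup (GL (Fin 2) R) :=
  (Matrix.SpecialLinearGroup.toGL (n := Fin 2) (R := R)).range

namespace Stmt13Aux

open Matrix
open scoped commutatorElement

set_option maxRecDepth 40000
set_option maxHeartbeats 2000000

instance : DecidableEq SL(2, ZMod 3) :=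
  inferInstanceAs (DecidableEq {A : Matrix (Fin 2) (Fin 2) (ZMod 3) // A.det = 1})
instance : Fintype SL(2, ZMod 3) :=
  inferInstanceAs (Fintype {A : Matrix (Fin 2) (Fin 2) (ZMod 3) // A.det = 1})

lemma mul4 : ∀ a b : SL(2, ZMod 3), a ^ 4 = 1 → b ^ 4 = 1 → (a * b) ^ 4 = 1 := by decide

lemma comm4 : ∀ a b : SL(2, ZMod 3), ((a * b)⁻¹ * (b * a)) ^ 4 = 1 := by decide

lemma conj4 : ∀ a g : SL(2, ZMod 3), a ^ 4 = 1 → (g * a * g⁻¹) ^ 4 = 1 := by decide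

lemma dich : ∀ a b c d : ZMod 9, a * d - b * c = 1 →
    (∃ v : ZMod 9, c * v = 1 ∧ v * c = 1) ∨
    (∃ v : ZMod 9, (a + c) * v = 1 ∧ v * (a + c) = 1) := by decide

lemma entry3 : ∀ x : ZMod 9, (ZMod.castHom (by norm_num : (3:ℕ) ∣ 9) (ZMod 3)) x = 0 →
    x = 3 * (if x = 3 then 1 else if x = 6 then 2 else 0) := by decide

/-! ### The reduction map mod 3 and its kernel -/

def red : GL (Fin 2) (ZMod 9) →* GL (Fin 2) (ZMod 3) :=
  Matrix.GeneralLinearGroup.map (ZMod.castHom (by norm_num : (3:ℕ) ∣ 9) (ZMod 3))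

lemma ker_pow_three {g : GL (Fin 2) (ZMod 9)} (hg : red g = 1) : g ^ 3 = 1 := by
  set f := ZMod.castHom (by norm_num : (3:ℕ) ∣ 9) (ZMod 3) with hf
  set M : Matrix (Fin 2) (Fin 2) (ZMod 9) := (g : Matrix (Fin 2) (Fin 2) (ZMod 9)) - 1 with hM
  have h1 : ((g : Matrix (Fin 2) (Fin 2) (ZMod 9)).map f) = 1 := congrArg Units.val hg
  have h3 : M.map f = 0 := by
    rw [hM, Matrix.map_sub f (fun a b => map_sub f a b), h1,
      Matrix.map_one f (map_zero f) (map_one f), sub_self]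
  have hent : ∀ i j, f (M i j) = 0 := by
    intro i j
    have := congrFun (congrFun h3 i) j
    simpa [Matrix.map_apply] using this
  set N : Matrix (Fin 2) (Fin 2) (ZMod 9) :=
    M.map (fun x => if x = 3 then 1 else if x = 6 then 2 else 0) with hN
  have hMN : M = (3 : ZMod 9) • N := by
    ext i j
    simp only [hN, Matrix.smul_apply, Matrix.map_apply, smul_eq_mul]
    exact entry3 _ (hent i j)
  have h33 : (3 : ZMod 9) * 3 = 0 := by decide
  have h333 : (3 : ZMod 9) + 3 + 3 = 0 := by decide
  have hMM : M * M = 0 := by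
    rw [hMN, smul_mul_assoc, mul_smul_comm, smul_smul, h33, zero_smul]
  have h3M : M + M + M = 0 := by
    rw [hMN, ← add_smul, ← add_smul, h333, zero_smul]
  have hval : (g : Matrix (Fin 2) (Fin 2) (ZMod 9)) = 1 + M := by
    rw [hM]; abel
  apply Units.ext
  have : ((g : Matrix (Fin 2) (Fin 2) (ZMod 9))) ^ 3 = 1 := by
    rw [hval]
    have e : (1 + M) ^ 3 = 1 + (M + M + M) + (M * M + M * M + M * M) + M * M * M := by
      noncomm_ring
    rw [e, hMM, h3M]
    simp
  simpa [Units.val_pow_eq_pow_val] using this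

instance fact3 : Fact (Nat.Prime 3) := ⟨by norm_num⟩
instance fact2 : Fact (Nat.Prime 2) := ⟨by norm_num⟩

lemma solvK : Group.IsSolvable red.ker := by
  have hp : IsPGroup 3 red.ker := by
    intro x
    refine ⟨1, ?_⟩
    have hx : x.val ^ 3 = 1 := ker_pow_three (MonoidHom.mem_ker.mp x.2)
    refine Subtype.ext ?_
    have h31 : (3:ℕ) ^ 1 = 3 := by norm_num
    rw [h31]
    simpa using hx
  haveI := hp.isNilpotent
  infer_instance

/-! ### Solvability of `SL(2, ZMod 3)` -/

def Q8 : Subgroup SL(2, ZMod 3) where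
  carrier := {g | g ^ 4 = 1}
  one_mem' := by show (1 : SL(2, ZMod 3)) ^ 4 = 1; rw [one_pow]
  mul_mem' := fun {a b} ha hb => mul4 a b ha hb
  inv_mem' := fun {a} ha => by
    show (a⁻¹) ^ 4 = 1
    rw [inv_pow, show a ^ 4 = 1 from ha, inv_one]

instance : Q8.Normal := ⟨fun n hn g => conj4 n g hn⟩

lemma solvSL3 : Group.IsSolvable SL(2, ZMod 3) := by
  haveI : Group.IsSolvable Q8 := by
    have hp : IsPGroup 2 Q8 := by
      intro x
      refine ⟨2, ?_⟩
      have hx : (x : SL(2, ZMod 3)) ^ 4 = 1 := x.2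
      refine Subtype.ext ?_
      have h22 : (2:ℕ) ^ 2 = 4 := by norm_num
      rw [h22]
      simpa using hx
    haveI := hp.isNilpotent
    infer_instance
  haveI : Group.IsSolvable (SL(2, ZMod 3) ⧸ Q8) := by
    apply isSolvable_of_comm
    intro a b
    obtain ⟨x, rfl⟩ := QuotientGroup.mk'_surjective Q8 a
    obtain ⟨y, rfl⟩ := QuotientGroup.mk'_surjective Q8 b
    rw [← MonoidHom.map_mul, ← MonoidHom.map_mul]
    exact (QuotientGroup.eq ).mpr (comm4 x y)
  exact solvable_of_ker_le_range Q8.subtype (QuotientGroup.mk' Q8)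
    (by rw [QuotientGroup.ker_mk', Subgroup.range_subtype])

lemma solvGL3 : Group.IsSolvable (GL (Fin 2) (ZMod 3)) := by
  haveI := solvSL3
  refine solvable_of_ker_le_range Matrix.SpecialLinearGroup.toGL
    Matrix.GeneralLinearGroup.det ?_
  intro g hg
  have h1 : (g : Matrix (Fin 2) (Fin 2) (ZMod 3)).det = 1 := congrArg Units.val hg
  exact ⟨⟨(g : Matrix (Fin 2) (Fin 2) (ZMod 3)), h1⟩, Units.ext rfl⟩

lemma solvGL9 : Group.IsSolvable (GL (Fin 2) (ZMod 9)) := by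
  haveI := solvGL3
  haveI := solvK
  exact solvable_of_ker_le_range red.ker.subtype red (by rw [Subgroup.range_subtype])

/-! ### Elementary matrices are commutators -/

def U (t : ZMod 9) : GL (Fin 2) (ZMod 9) :=
  ⟨!![1, t; 0, 1], !![1, -t; 0, 1],
    by rw [Matrix.mul_fin_two, Matrix.one_fin_two]; congr 1 <;> ring,
    by rw [Matrix.mul_fin_two, Matrix.one_fin_two]; congr 1 <;> ring⟩

def L (t : ZMod 9) : GL (Fin 2) (ZMod 9) :=
  ⟨!![1, 0; t, 1], !![1, 0; -t, 1],
    by rw [Matrix.mul_fin_two, Matrix.one_fin_two]; congr 1 <;> ring,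
    by rw [Matrix.mul_fin_two, Matrix.one_fin_two]; congr 1 <;> ring⟩

def D2 : GL (Fin 2) (ZMod 9) := ⟨!![2, 0; 0, 1], !![5, 0; 0, 1], by decide, by decide⟩

def D2' : GL (Fin 2) (ZMod 9) := ⟨!![1, 0; 0, 2], !![1, 0; 0, 5], by decide, by decide⟩

@[simp] lemma U_val (t : ZMod 9) : (U t : Matrix (Fin 2) (Fin 2) (ZMod 9)) = !![1, t; 0, 1] := rfl
@[simp] lemma U_inv_val (t : ZMod 9) :
    ((U t)⁻¹ : GL (Fin 2) (ZMod 9)).val = !![1, -t; 0, 1] := rfl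
@[simp] lemma L_val (t : ZMod 9) : (L t : Matrix (Fin 2) (Fin 2) (ZMod 9)) = !![1, 0; t, 1] := rfl
@[simp] lemma L_inv_val (t : ZMod 9) :
    ((L t)⁻¹ : GL (Fin 2) (ZMod 9)).val = !![1, 0; -t, 1] := rfl
@[simp] lemma D2_val : (D2 : Matrix (Fin 2) (Fin 2) (ZMod 9)) = !![2, 0; 0, 1] := rfl
@[simp] lemma D2_inv_val : ((D2)⁻¹ : GL (Fin 2) (ZMod 9)).val = !![5, 0; 0, 1] := rfl
@[simp] lemma D2'_val : (D2' : Matrix (Fin 2) (Fin 2) (ZMod 9)) = !![1, 0; 0, 2] := rfl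
@[simp] lemma D2'_inv_val : ((D2')⁻¹ : GL (Fin 2) (ZMod 9)).val = !![1, 0; 0, 5] := rfl

lemma h9 : (9 : ZMod 9) = 0 := by decide

lemma U_mem (t : ZMod 9) : U t ∈ commutator (GL (Fin 2) (ZMod 9)) := by
  have key : U t = ⁅D2, U t⁆ := by
    apply Units.ext
    show (U t).val = (D2 * U t * D2⁻¹ * (U t)⁻¹).val
    rw [Units.val_mul, Units.val_mul, Units.val_mul, U_val, D2_val, D2_inv_val, U_inv_val,
      Matrix.mul_fin_two, Matrix.mul_fin_two, Matrix.mul_fin_two]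
    ext i j
    fin_cases i <;> fin_cases j <;> simp <;> first | decide | linear_combination t * h9
  rw [key]
  exact Subgroup.commutator_mem_commutator (Subgroup.mem_top _) (Subgroup.mem_top _)

lemma L_mem (t : ZMod 9) : L t ∈ commutator (GL (Fin 2) (ZMod 9)) := by
  have key : L t = ⁅D2', L t⁆ := by
    apply Units.ext
    show (L t).val = (D2' * L t * D2'⁻¹ * (L t)⁻¹).val
    rw [Units.val_mul, Units.val_mul, Units.val_mul, L_val, D2'_val, D2'_inv_val, L_inv_val,
      Matrix.mul_fin_two, Matrix.mul_fin_two, Matrix.mul_fin_two]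
    ext i j
    fin_cases i <;> fin_cases j <;> simp <;> first | decide | linear_combination t * h9
  rw [key]
  exact Subgroup.commutator_mem_commutator (Subgroup.mem_top _) (Subgroup.mem_top _)

lemma mem_comm_of_unit {g : GL (Fin 2) (ZMod 9)} {a b c d v : ZMod 9}
    (hval : (g : Matrix (Fin 2) (Fin 2) (ZMod 9)) = !![a, b; c, d])
    (hdet : a * d - b * c = 1) (hv : v * c = 1) :
    g ∈ commutator (GL (Fin 2) (ZMod 9)) := by
  have key : g = U ((a - 1) * v) * L c * U ((d - 1) * v) := by
    apply Units.ext
    show (g : Matrix (Fin 2) (Fin 2) (ZMod 9)) = _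
    rw [hval, Units.val_mul, Units.val_mul, U_val, L_val, U_val,
      Matrix.mul_fin_two, Matrix.mul_fin_two]
    ext i j
    fin_cases i <;> fin_cases j <;> simp
    · linear_combination (1 - a) * hv
    · linear_combination (-b - (a - 1) * (d - 1) * v) * hv - v * hdet
    · linear_combination (1 - d) * hv
  rw [key]
  exact mul_mem (mul_mem (U_mem _) (L_mem _)) (U_mem _)

lemma SL2_le_comm : SL2subgroup (ZMod 9) ≤ commutator (GL (Fin 2) (ZMod 9)) := by
  rintro x ⟨s, rfl⟩
  set a := s.val 0 0
  set b := s.val 0 1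
  set c := s.val 1 0
  set d := s.val 1 1
  have hval : ((Matrix.SpecialLinearGroup.toGL s : GL (Fin 2) (ZMod 9)) :
      Matrix (Fin 2) (Fin 2) (ZMod 9)) = !![a, b; c, d] := Matrix.eta_fin_two _
  have hdet : a * d - b * c = 1 := by
    have := s.2
    rwa [Matrix.det_fin_two] at this
  rcases dich a b c d hdet with ⟨v, hv1, hv2⟩ | ⟨v, hv1, hv2⟩
  · exact mem_comm_of_unit hval hdet hv2
  · have hval2 : ((L 1 * Matrix.SpecialLinearGroup.toGL s : GL (Fin 2) (ZMod 9)) :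
        Matrix (Fin 2) (Fin 2) (ZMod 9)) = !![a, b; a + c, b + d] := by
      rw [Units.val_mul, L_val, hval, Matrix.mul_fin_two]
      ext i j
      fin_cases i <;> fin_cases j <;> simp <;> ring
    have hdet2 : a * (b + d) - b * (a + c) = 1 := by linear_combination hdet
    have h2 : L 1 * Matrix.SpecialLinearGroup.toGL s ∈ commutator (GL (Fin 2) (ZMod 9)) :=
      mem_comm_of_unit hval2 hdet2 hv2
    have hrw : Matrix.SpecialLinearGroup.toGL s =
        (L 1)⁻¹ * (L 1 * Matrix.SpecialLinearGroup.toGL s) := by group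
    rw [hrw]
    exact mul_mem (inv_mem (L_mem 1)) h2

end Stmt13Aux

open Stmt13Aux in
/-- Let `H ⊴ GL₂(ℤ/9ℤ)` be a normal subgroup such that the subgroup generated by
`SL₂(ℤ/9ℤ)` together with `H` is all of `GL₂(ℤ/9ℤ)`.  Then `H = GL₂(ℤ/9ℤ)`. -/
theorem statement13 (H : Subgroup (GL (Fin 2) (ZMod 9))) [H.Normal]
    (h : SL2subgroup (ZMod 9) ⊔ H = ⊤) : H = ⊤ := by
  haveI := solvGL9
  set π := QuotientGroup.mk' H with hπ
  have hsur : Function.Surjective π := QuotientGroup.mk'_surjective H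
  have hmapH : Subgroup.map π H = ⊥ :=
    (Subgroup.map_eq_bot_iff H).mpr (by rw [hπ, QuotientGroup.ker_mk'])
  have htop : Subgroup.map π (SL2subgroup (ZMod 9)) = ⊤ := by
    have h2 := congrArg (Subgroup.map π) h
    rwa [Subgroup.map_sup, hmapH, sup_bot_eq, ← MonoidHom.range_eq_map,
      MonoidHom.range_eq_top_of_surjective _ hsur] at h2
  have hcomm : commutator (GL (Fin 2) (ZMod 9) ⧸ H) = ⊤ := by
    apply top_unique
    calc (⊤ : Subgroup (GL (Fin 2) (ZMod 9) ⧸ H)) = Subgroup.map π (SL2subgroup (ZMod 9)) :=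
          htop.symm
      _ ≤ Subgroup.map π (commutator (GL (Fin 2) (ZMod 9))) := Subgroup.map_mono SL2_le_comm
      _ ≤ commutator (GL (Fin 2) (ZMod 9) ⧸ H) := by
          rw [commutator_def, Subgroup.map_commutator, commutator_def]
          exact Subgroup.commutator_mono le_top le_top
  have hder : ∀ n, derivedSeries (GL (Fin 2) (ZMod 9) ⧸ H) n = ⊤ := by
    intro n
    induction n with
    | zero => rfl
    | succ n ih => rw [derivedSeries_succ, ih]; exact hcomm
  obtain ⟨n, hn⟩ := (isSolvable_def _).mp (inferInstance :
    Group.IsSolvable (GL (Fin 2) (ZMod 9) ⧸ H))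
  have hQ : (⊤ : Subgroup (GL (Fin 2) (ZMod 9) ⧸ H)) = ⊥ := by rw [← hder n, hn]
  rw [Subgroup.eq_top_iff']
  intro g
  have hmem : π g ∈ (⊥ : Subgroup (GL (Fin 2) (ZMod 9) ⧸ H)) := hQ ▸ Subgroup.mem_top (π g)
  exact (QuotientGroup.eq_one_iff g).mp (Subgroup.mem_bot.mp hmem)
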